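/- Let f : ℝ² → ℂ be a Schwartz function with support contained in the right wedge W = {(t,x) : x > |t|}. Then the restriction of its Fourier transform to the mass shell p = m(cosh θ, sinh θ), m > 0, namely θ ↦ f̂(m cosh θ, m sinh θ), extends to a function holomorphic in the strip {z ∈ ℂ : −π < Im z < 0} and continuous on its closure. -/

import Mathlib

open Complex MeasureTheory Real

lemma my_cosh_im (z : ℂ) : (Complex.cosh z).im = Real.sinh z.re * Real.sin z.im := by
  simp [Complex.cosh, Complex.exp_im, Complex.div_im, Real.sinh_eq]; ring

lemma my_sinh_im (z : ℂ) : (Complex.sinh z).im = Real.cosh z.re * Real.sin z.im := by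
  simp [Complex.sinh, Complex.exp_im, Complex.div_im, Real.cosh_eq]; ring

lemma my_re_nonpos (m : ℝ) (hm : 0 ≤ m) (z : ℂ) (hz1 : -π ≤ z.im) (hz2 : z.im ≤ 0)
    (t x : ℝ) (ht : |t| ≤ x) :
    (Complex.I * ((m : ℂ) * Complex.cosh z * (t : ℂ) - (m : ℂ) * Complex.sinh z * (x : ℂ))).re ≤ 0 := by
  have hsin : Real.sin z.im ≤ 0 := Real.sin_nonpos_of_nonpos_of_neg_pi_le hz2 hz1
  have habs : |Real.sinh z.re| ≤ Real.cosh z.re := by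
    have h1 := Real.cosh_sub_sinh z.re
    have h2 := Real.cosh_add_sinh z.re
    have := Real.exp_pos z.re
    have := Real.exp_pos (-z.re)
    rw [abs_le]; constructor <;> linarith
  have h1 : Real.sinh z.re * t ≤ Real.cosh z.re * x := by
    calc Real.sinh z.re * t ≤ |Real.sinh z.re * t| := le_abs_self _
    _ = |Real.sinh z.re| * |t| := abs_mul _ _
    _ ≤ Real.cosh z.re * x := mul_le_mul habs ht (abs_nonneg _) (Real.cosh_pos _).le
  have key : (Complex.I * ((m : ℂ) * Complex.cosh z * (t : ℂ) - (m : ℂ) * Complex.sinh z * (x : ℂ))).re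
      = m * Real.sin z.im * (Real.cosh z.re * x - Real.sinh z.re * t) := by
    simp [Complex.mul_re, Complex.mul_im, my_cosh_im, my_sinh_im]
    ring
  rw [key]
  exact mul_nonpos_of_nonpos_of_nonneg
    (mul_nonpos_of_nonneg_of_nonpos hm hsin) (by linarith)

lemma my_norm_cosh_le (z : ℂ) : ‖Complex.cosh z‖ ≤ Real.exp ‖z‖ := by
  have h1 : Complex.cosh z = (Complex.exp z + Complex.exp (-z)) / 2 := rfl
  rw [h1]
  have e1 : ‖Complex.exp z‖ ≤ Real.exp ‖z‖ := by
    rw [Complex.norm_exp]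
    exact Real.exp_le_exp.2 ((le_abs_self _).trans (Complex.abs_re_le_norm z))
  have e2 : ‖Complex.exp (-z)‖ ≤ Real.exp ‖z‖ := by
    rw [Complex.norm_exp]
    refine Real.exp_le_exp.2 ?_
    have := (le_abs_self (-z).re).trans (Complex.abs_re_le_norm (-z))
    simpa using this
  calc ‖(Complex.exp z + Complex.exp (-z)) / 2‖ = ‖Complex.exp z + Complex.exp (-z)‖ / 2 := by
        simp [norm_div]
    _ ≤ (Real.exp ‖z‖ + Real.exp ‖z‖) / 2 := by
        have := norm_add_le (Complex.exp z) (Complex.exp (-z))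
        linarith
    _ = Real.exp ‖z‖ := by ring

lemma my_norm_sinh_le (z : ℂ) : ‖Complex.sinh z‖ ≤ Real.exp ‖z‖ := by
  have h1 : Complex.sinh z = (Complex.exp z - Complex.exp (-z)) / 2 := rfl
  rw [h1]
  have e1 : ‖Complex.exp z‖ ≤ Real.exp ‖z‖ := by
    rw [Complex.norm_exp]
    exact Real.exp_le_exp.2 ((le_abs_self _).trans (Complex.abs_re_le_norm z))
  have e2 : ‖Complex.exp (-z)‖ ≤ Real.exp ‖z‖ := by
    rw [Complex.norm_exp]
    refine Real.exp_le_exp.2 ?_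
    have := (le_abs_self (-z).re).trans (Complex.abs_re_le_norm (-z))
    simpa using this
  calc ‖(Complex.exp z - Complex.exp (-z)) / 2‖ = ‖Complex.exp z - Complex.exp (-z)‖ / 2 := by
        simp [norm_div]
    _ ≤ (Real.exp ‖z‖ + Real.exp ‖z‖) / 2 := by
        have := norm_sub_le (Complex.exp z) (Complex.exp (-z))
        linarith
    _ = Real.exp ‖z‖ := by ring

/-- For a Schwartz function `f` on `ℝ²` supported in the right wedge
`W = {(t,x) : x > |t|}`, the restriction of its (Minkowski) Fourier transform
`f̂(p) = ∫ e^{i(p⁰t − p¹x)} f(t,x) dt dx` to the mass shell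
`p = m(cosh θ, sinh θ)` extends to a function of the complex rapidity `z` which is
holomorphic in the strip `−π < Im z < 0` and continuous on its closure. -/
theorem wedge_support_mass_shell_analyticity
    (m : ℝ) (hm : 0 < m) (f : SchwartzMap (ℝ × ℝ) ℂ)
    (hsupp : ∀ x : ℝ × ℝ, ¬ |x.1| < x.2 → f x = 0) :
    DifferentiableOn ℂ
      (fun z : ℂ => ∫ x : ℝ × ℝ,
        Complex.exp (Complex.I * ((m : ℂ) * Complex.cosh z * (x.1 : ℂ)
          - (m : ℂ) * Complex.sinh z * (x.2 : ℂ))) * f x)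
      {z : ℂ | -π < z.im ∧ z.im < 0} ∧
    ContinuousOn
      (fun z : ℂ => ∫ x : ℝ × ℝ,
        Complex.exp (Complex.I * ((m : ℂ) * Complex.cosh z * (x.1 : ℂ)
          - (m : ℂ) * Complex.sinh z * (x.2 : ℂ))) * f x)
      {z : ℂ | -π ≤ z.im ∧ z.im ≤ 0} := by
  set E : ℂ → ℝ × ℝ → ℂ := fun z a =>
    Complex.I * ((m : ℂ) * Complex.cosh z * (a.1 : ℂ) - (m : ℂ) * Complex.sinh z * (a.2 : ℂ))
    with hE
  set F : ℂ → ℝ × ℝ → ℂ := fun z a => Complex.exp (E z a) * f a with hF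
  -- pointwise norm bound on the closed strip
  have hbound : ∀ z : ℂ, -π ≤ z.im → z.im ≤ 0 → ∀ a : ℝ × ℝ, ‖F z a‖ ≤ ‖f a‖ := by
    intro z hz1 hz2 a
    by_cases ha : |a.1| < a.2
    · have hre := my_re_nonpos m hm.le z hz1 hz2 a.1 a.2 ha.le
      rw [hF]
      simp only [norm_mul]
      have : ‖Complex.exp (E z a)‖ ≤ 1 := by
        rw [Complex.norm_exp]
        exact Real.exp_le_one_iff.mpr hre
      exact mul_le_of_le_one_left (norm_nonneg _) this
    · simp [hF, hsupp a ha]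
  -- measurability in `a` for each `z`
  have hcontE : ∀ z : ℂ, Continuous (fun a : ℝ × ℝ => E z a) := by
    intro z
    fun_prop
  have hmeas : ∀ z : ℂ, AEStronglyMeasurable (F z) volume := by
    intro z
    exact ((Complex.continuous_exp.comp (hcontE z)).mul f.continuous).aestronglyMeasurable
  have hfint : Integrable (fun a : ℝ × ℝ => ‖f a‖) volume := (f.integrable).norm
  -- continuity part
  have hcont : ContinuousOn
      (fun z : ℂ => ∫ a : ℝ × ℝ, F z a) {z : ℂ | -π ≤ z.im ∧ z.im ≤ 0} := by
    apply MeasureTheory.continuousOn_of_dominated (bound := fun a => ‖f a‖)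
    · intro z _; exact hmeas z
    · intro z hz
      exact Filter.Eventually.of_forall (hbound z hz.1 hz.2)
    · exact hfint
    · refine Filter.Eventually.of_forall (fun a => ?_)
      apply Continuous.continuousOn
      fun_prop
  refine ⟨?_, hcont⟩
  -- differentiability part
  have hopen : IsOpen {z : ℂ | -π < z.im ∧ z.im < 0} := by
    have : {z : ℂ | -π < z.im ∧ z.im < 0} = Complex.im ⁻¹' Set.Ioo (-π) 0 := rfl
    rw [this]
    exact isOpen_Ioo.preimage Complex.continuous_im
  intro z₀ hz₀
  obtain ⟨h1, h2⟩ := hz₀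
  set ε : ℝ := min (z₀.im + π) (-z₀.im) with hε
  have hεpos : 0 < ε := lt_min (by linarith) (by linarith)
  -- points in the ball are in the closed strip
  have hball : ∀ z ∈ Metric.ball z₀ ε, -π ≤ z.im ∧ z.im ≤ 0 := by
    intro z hz
    have hd : dist z z₀ < ε := hz
    have him : |z.im - z₀.im| ≤ dist z z₀ := by
      rw [Complex.dist_eq]
      exact (Complex.abs_im_le_norm (z - z₀)).trans_eq' (by simp [Complex.sub_im])
    have h3 : |z.im - z₀.im| < ε := lt_of_le_of_lt him hd
    rw [abs_lt] at h3
    constructor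
    · have := min_le_left (z₀.im + π) (-z₀.im)
      linarith [h3.1, this]
    · have := min_le_right (z₀.im + π) (-z₀.im)
      linarith [h3.2, this]
  set R : ℝ := ‖z₀‖ + ε with hR
  have hballR : ∀ z ∈ Metric.ball z₀ ε, ‖z‖ ≤ R := by
    intro z hz
    have : ‖z - z₀‖ < ε := by simpa [Complex.dist_eq] using hz
    calc ‖z‖ = ‖z₀ + (z - z₀)‖ := by ring_nf
    _ ≤ ‖z₀‖ + ‖z - z₀‖ := norm_add_le _ _
    _ ≤ ‖z₀‖ + ε := by linarith
  set F' : ℂ → ℝ × ℝ → ℂ := fun z a =>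
    Complex.exp (E z a) *
      (Complex.I * ((m : ℂ) * Complex.sinh z * (a.1 : ℂ) - (m : ℂ) * Complex.cosh z * (a.2 : ℂ)))
      * f a with hF'
  have hderiv : ∀ (a : ℝ × ℝ) (z : ℂ), HasDerivAt (fun w => F w a) (F' z a) z := by
    intro a z
    have hc : HasDerivAt (fun w : ℂ => (m : ℂ) * Complex.cosh w * (a.1 : ℂ))
        ((m : ℂ) * Complex.sinh z * (a.1 : ℂ)) z :=
      ((Complex.hasDerivAt_cosh z).const_mul (m : ℂ)).mul_const _
    have hs : HasDerivAt (fun w : ℂ => (m : ℂ) * Complex.sinh w * (a.2 : ℂ))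
        ((m : ℂ) * Complex.cosh z * (a.2 : ℂ)) z :=
      ((Complex.hasDerivAt_sinh z).const_mul (m : ℂ)).mul_const _
    have hE' : HasDerivAt (fun w => E w a)
        (Complex.I * ((m : ℂ) * Complex.sinh z * (a.1 : ℂ) - (m : ℂ) * Complex.cosh z * (a.2 : ℂ))) z :=
      (hc.sub hs).const_mul Complex.I
    exact (hE'.cexp).mul_const (f a)
  -- bound for the derivative on the ball
  set bnd : ℝ × ℝ → ℝ := fun a => m * Real.exp R * (2 * (‖a‖ * ‖f a‖)) with hbnd
  have hbndle : ∀ a : ℝ × ℝ, ∀ z ∈ Metric.ball z₀ ε, ‖F' z a‖ ≤ bnd a := by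
    intro a z hz
    by_cases ha : |a.1| < a.2
    · obtain ⟨hz1, hz2⟩ := hball z hz
      have hre := my_re_nonpos m hm.le z hz1 hz2 a.1 a.2 ha.le
      have hexp : ‖Complex.exp (E z a)‖ ≤ 1 := by
        rw [Complex.norm_exp]
        exact Real.exp_le_one_iff.mpr hre
      have hnormR := hballR z hz
      have hmid : ‖Complex.I * ((m : ℂ) * Complex.sinh z * (a.1 : ℂ)
          - (m : ℂ) * Complex.cosh z * (a.2 : ℂ))‖ ≤ m * Real.exp R * (2 * ‖a‖) := by
        rw [norm_mul, Complex.norm_I, one_mul]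
        have t1 : ‖(m : ℂ) * Complex.sinh z * (a.1 : ℂ)‖ ≤ m * Real.exp R * ‖a‖ := by
          rw [norm_mul, norm_mul]
          have e1 : ‖Complex.sinh z‖ ≤ Real.exp R :=
            (my_norm_sinh_le z).trans (Real.exp_le_exp.2 hnormR)
          have e2 : ‖(a.1 : ℂ)‖ ≤ ‖a‖ := by
            rw [Complex.norm_real]; exact norm_fst_le a
          have e3 : ‖(m : ℂ)‖ = m := by
            simp [Complex.norm_real, abs_of_pos hm]
          rw [e3]
          exact mul_le_mul (mul_le_mul_of_nonneg_left e1 hm.le) e2 (norm_nonneg _)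
            (mul_nonneg hm.le (Real.exp_pos _).le)
        have t2 : ‖(m : ℂ) * Complex.cosh z * (a.2 : ℂ)‖ ≤ m * Real.exp R * ‖a‖ := by
          rw [norm_mul, norm_mul]
          have e1 : ‖Complex.cosh z‖ ≤ Real.exp R :=
            (my_norm_cosh_le z).trans (Real.exp_le_exp.2 hnormR)
          have e2 : ‖(a.2 : ℂ)‖ ≤ ‖a‖ := by
            rw [Complex.norm_real]; exact norm_snd_le a
          have e3 : ‖(m : ℂ)‖ = m := by
            simp [Complex.norm_real, abs_of_pos hm]
          rw [e3]
          exact mul_le_mul (mul_le_mul_of_nonneg_left e1 hm.le) e2 (norm_nonneg _)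
            (mul_nonneg hm.le (Real.exp_pos _).le)
        calc ‖(m : ℂ) * Complex.sinh z * (a.1 : ℂ) - (m : ℂ) * Complex.cosh z * (a.2 : ℂ)‖
            ≤ ‖(m : ℂ) * Complex.sinh z * (a.1 : ℂ)‖ + ‖(m : ℂ) * Complex.cosh z * (a.2 : ℂ)‖ :=
              norm_sub_le _ _
        _ ≤ m * Real.exp R * ‖a‖ + m * Real.exp R * ‖a‖ := add_le_add t1 t2
        _ = m * Real.exp R * (2 * ‖a‖) := by ring
      rw [hF', norm_mul, norm_mul]
      calc ‖Complex.exp (E z a)‖ * ‖Complex.I * ((m : ℂ) * Complex.sinh z * (a.1 : ℂ)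
              - (m : ℂ) * Complex.cosh z * (a.2 : ℂ))‖ * ‖f a‖
          ≤ 1 * (m * Real.exp R * (2 * ‖a‖)) * ‖f a‖ := by
            apply mul_le_mul _ le_rfl (norm_nonneg _)
            · positivity
            · exact mul_le_mul hexp hmid (norm_nonneg _) zero_le_one
      _ = bnd a := by rw [hbnd]; ring
    · have h0 : f a = 0 := hsupp a ha
      rw [hF']
      simp only [h0, mul_zero, norm_zero, hbnd]
      positivity
  have hbndint : Integrable bnd volume := by
    have := (f.integrable_pow_mul volume 1)
    simp only [pow_one] at this
    exact (this.const_mul 2).const_mul (m * Real.exp R)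
  have hF'cont : Continuous (F' z₀) := by
    rw [hF']
    fun_prop
  have key := hasDerivAt_integral_of_dominated_loc_of_deriv_le (F := F) (F' := F')
    (bound := bnd) (x₀ := z₀) (Metric.ball_mem_nhds z₀ hεpos)
    (Filter.Eventually.of_forall (fun z => hmeas z))
    (hfint.mono' (hmeas z₀)
      (Filter.Eventually.of_forall (fun a =>
        hbound z₀ h1.le h2.le a)))
    (hF'cont.aestronglyMeasurable)
    (Filter.Eventually.of_forall (fun a => fun z hz => hbndle a z hz))
    hbndint
    (Filter.Eventually.of_forall (fun a => fun z _ => hderiv a z))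
  exact (key.2.differentiableAt).differentiableWithinAt
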